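/- For 1<q<p and f,A,F>0 satisfying f^q < A < f^{(p-q)/(p-1)} F^{(q-1)/(p-1)} and ω_q(f^q/A) > ω_p(f^p/F), there exists a unique κ ∈ ((f^q/A)^{1/(q-1)}, 1) such that ω_q(f^q/(κ^{q-1}A)) = ω_p(f^p/(κ^{p-1}F)). -/

import Mathlib

open Real Set

private lemma Hcont (r : ℝ) : ContinuousOn (fun z : ℝ => r * z ^ (r-1) - (r-1) * z ^ r) (Ici 1) := by
  refine ContinuousOn.sub (continuousOn_const.mul ?_) (continuousOn_const.mul ?_) <;>
  · intro z hz
    exact (Real.continuousAt_rpow_const z _ (Or.inl (by simp only [mem_Ici] at hz; positivity))).continuousWithinAt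

private lemma HhasDeriv (r : ℝ) (z : ℝ) (hz : 0 < z) :
    HasDerivAt (fun z : ℝ => r * z ^ (r-1) - (r-1) * z ^ r)
      (r * ((r-1) * z ^ (r-1-1)) - (r-1) * (r * z ^ (r-1))) z :=
  ((Real.hasDerivAt_rpow_const (Or.inl hz.ne')).const_mul r).sub
    ((Real.hasDerivAt_rpow_const (Or.inl hz.ne')).const_mul (r-1))

private lemma HstrictAnti (r : ℝ) (hr : 1 < r) :
    StrictAntiOn (fun z : ℝ => r * z ^ (r-1) - (r-1) * z ^ r) (Ici 1) := by
  apply strictAntiOn_of_deriv_neg (convex_Ici 1) (Hcont r)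
  intro z hz
  rw [interior_Ici] at hz
  have hz1 : (1:ℝ) < z := hz
  have hz0 : (0:ℝ) < z := by linarith
  rw [(HhasDeriv r z hz0).deriv]
  have h : z ^ (r-1-1) < z ^ (r-1) := by
    rw [Real.rpow_lt_rpow_left_iff hz1]; linarith
  nlinarith [mul_pos (mul_pos (show (0:ℝ) < r by linarith) (show (0:ℝ) < r-1 by linarith))
    (sub_pos.mpr h)]

private lemma Hone (r : ℝ) : r * (1:ℝ) ^ (r-1) - (r-1) * (1:ℝ) ^ r = 1 := by
  simp [Real.one_rpow]

private lemma Htop (r : ℝ) (hr : 1 < r) :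
    r * (r/(r-1)) ^ (r-1) - (r-1) * (r/(r-1)) ^ r = 0 := by
  have hm : (0:ℝ) < r/(r-1) := div_pos (by linarith) (by linarith)
  have h1 : (r/(r-1)) ^ r = (r/(r-1)) ^ (r-1) * (r/(r-1)) := by
    rw [← Real.rpow_add_one hm.ne' (r-1)]; ring_nf
  have h2 : (r-1)*(r/(r-1)) = r := by rw [mul_comm]; exact div_mul_cancel₀ r (by linarith)
  rw [h1, show (r-1)*((r/(r-1))^(r-1) * (r/(r-1))) = ((r-1)*(r/(r-1)))*(r/(r-1))^(r-1) by ring,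
    h2]
  ring

private lemma Htop_ge_one (r : ℝ) (hr : 1 < r) : (1:ℝ) ≤ r/(r-1) :=
  le_of_lt ((one_lt_div (by linarith)).mpr (by linarith))

private lemma Hpos (r : ℝ) (hr : 1 < r) (z : ℝ) (hz1 : 1 ≤ z) (hz2 : z < r/(r-1)) :
    0 < r * z ^ (r-1) - (r-1) * z ^ r := by
  have := HstrictAnti r hr hz1 (mem_Ici.mpr (Htop_ge_one r hr)) hz2
  simpa [Htop r hr] using this

private lemma Hlt_one (r : ℝ) (hr : 1 < r) (z : ℝ) (hz1 : 1 < z) :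
    r * z ^ (r-1) - (r-1) * z ^ r < 1 := by
  have := HstrictAnti r hr (mem_Ici.mpr le_rfl) (mem_Ici.mpr hz1.le) hz1
  simpa [Hone r] using this

private lemma ratio_lt (p q : ℝ) (hq : 1 < q) (hpq : q < p) : p/(p-1) < q/(q-1) := by
  rw [div_lt_div_iff₀ (by linarith) (by linarith)]
  nlinarith

private lemma PhiStrictAnti (p q : ℝ) (hq : 1 < q) (hpq : q < p) :
    StrictAntiOn (fun z : ℝ => (q-1) * Real.log (p * z^(p-1) - (p-1)*z^p)
      - (p-1) * Real.log (q * z^(q-1) - (q-1)*z^q)) (Ico 1 (p/(p-1))) := by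
  have hp : 1 < p := hq.trans hpq
  have hlt := ratio_lt p q hq hpq
  apply strictAntiOn_of_deriv_neg (convex_Ico _ _)
  · refine ContinuousOn.sub (continuousOn_const.mul (ContinuousOn.log
      ((Hcont p).mono Ico_subset_Ici_self) ?_))
      (continuousOn_const.mul (ContinuousOn.log ((Hcont q).mono Ico_subset_Ici_self) ?_))
    · exact fun z hz => (Hpos p hp z hz.1 hz.2).ne'
    · exact fun z hz => (Hpos q hq z hz.1 (hz.2.trans hlt)).ne'
  · intro z hz
    rw [interior_Ico] at hz
    obtain ⟨hz1, hz2⟩ := hz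
    have hz0 : (0:ℝ) < z := by linarith
    have hHP := Hpos p hp z hz1.le hz2
    have hHQ := Hpos q hq z hz1.le (hz2.trans hlt)
    have hd : HasDerivAt (fun z : ℝ => (q-1) * Real.log (p * z^(p-1) - (p-1)*z^p)
        - (p-1) * Real.log (q * z^(q-1) - (q-1)*z^q))
        ((q-1) * ((p * ((p-1) * z ^ (p-1-1)) - (p-1) * (p * z ^ (p-1))) / (p * z^(p-1) - (p-1)*z^p))
        - (p-1) * ((q * ((q-1) * z ^ (q-1-1)) - (q-1) * (q * z ^ (q-1))) / (q * z^(q-1) - (q-1)*z^q))) z :=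
      (((HhasDeriv p z hz0).log hHP.ne').const_mul (q-1)).sub
        (((HhasDeriv q z hz0).log hHQ.ne').const_mul (p-1))
    rw [hd.deriv]
    have e1 : z^(p-1) = z^(p-2)*z := by
      rw [show p-1 = p-2+1 by ring, Real.rpow_add_one hz0.ne']
    have e3 : z^(q-1) = z^(q-2)*z := by
      rw [show q-1 = q-2+1 by ring, Real.rpow_add_one hz0.ne']
    have e2 : z^p = z^(p-2)*z*z := by
      nth_rewrite 1 [show p = (p-1)+1 by ring]
      rw [Real.rpow_add_one hz0.ne', e1]
    have e4 : z^q = z^(q-2)*z*z := by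
      nth_rewrite 1 [show q = (q-1)+1 by ring]
      rw [Real.rpow_add_one hz0.ne', e3]
    rw [e1, e2] at hHP
    rw [e3, e4] at hHQ
    rw [show p-1-1 = p-2 by ring, show q-1-1 = q-2 by ring, e1, e2, e3, e4,
      ← mul_div_assoc, ← mul_div_assoc, div_sub_div _ _ hHP.ne' hHQ.ne']
    apply div_neg_of_neg_of_pos
    · have hX : 0 < z^(p-2) := Real.rpow_pos_of_pos hz0 _
      have hY : 0 < z^(q-2) := Real.rpow_pos_of_pos hz0 _
      have hnum : (q-1) * (p * ((p-1) * z^(p-2)) - (p-1) * (p * (z^(p-2)*z)))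
            * (q * (z^(q-2)*z) - (q-1) * (z^(q-2)*z*z))
          - (p * (z^(p-2)*z) - (p-1) * (z^(p-2)*z*z))
            * ((p-1) * (q * ((q-1) * z^(q-2)) - (q-1) * (q * (z^(q-2)*z))))
          = ((p-1)*(q-1)*((p-q)*(z^(p-2)*(z^(q-2)*(z*z)))))*(1-z) := by ring
      rw [hnum]
      apply mul_neg_of_pos_of_neg
      · have h0 : 0 < z^(p-2)*(z^(q-2)*(z*z)) := by positivity
        have h' : 0 < p-q := by linarith
        exact mul_pos (mul_pos (mul_pos (by linarith : (0:ℝ)<p-1) (by linarith : (0:ℝ)<q-1)) h') h0 |>.trans_eq (by ring)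
      · linarith
    · exact mul_pos hHP hHQ

set_option maxHeartbeats 2000000 in
/-- For `1 < q < p` and `f, A, F > 0` with `f^q < A < f^((p-q)/(p-1)) F^((q-1)/(p-1))`
and `ω_q(f^q/A) > ω_p(f^p/F)`, there exists a unique `κ ∈ ((f^q/A)^(1/(q-1)), 1)` with
`ω_q(f^q/(κ^(q-1)A)) = ω_p(f^p/(κ^(p-1)F))`. -/
theorem exists_unique_kappa (p q : ℝ) (hq : 1 < q) (hpq : q < p)
    (ωp ωq : ℝ → ℝ)
    (hωp : ∀ s ∈ Icc (0 : ℝ) 1, ωp s ∈ Icc 1 (p / (p - 1)) ∧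
      p * ωp s ^ (p - 1) - (p - 1) * ωp s ^ p = s)
    (hωq : ∀ s ∈ Icc (0 : ℝ) 1, ωq s ∈ Icc 1 (q / (q - 1)) ∧
      q * ωq s ^ (q - 1) - (q - 1) * ωq s ^ q = s)
    (f A F : ℝ) (hf : 0 < f) (hA : 0 < A) (hF : 0 < F)
    (h1 : f ^ q < A) (h2 : A < f ^ ((p - q) / (p - 1)) * F ^ ((q - 1) / (p - 1)))
    (h3 : ωq (f ^ q / A) > ωp (f ^ p / F)) :
    ∃! κ, κ ∈ Ioo ((f ^ q / A) ^ (1 / (q - 1))) 1 ∧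
      ωq (f ^ q / (κ ^ (q - 1) * A)) = ωp (f ^ p / (κ ^ (p - 1) * F)) := by
  have hp : 1 < p := hq.trans hpq
  have hq1 : (0:ℝ) < q - 1 := by linarith
  have hp1 : (0:ℝ) < p - 1 := by linarith
  have hratio := ratio_lt p q hq hpq
  have hfq : 0 < f ^ q := Real.rpow_pos_of_pos hf q
  have hfp : 0 < f ^ p := Real.rpow_pos_of_pos hf p
  have hsq0 : 0 < f ^ q / A := div_pos hfq hA
  have hsq1 : f ^ q / A < 1 := (div_lt_one hA).mpr h1
  set κ0 : ℝ := (f ^ q / A) ^ (1 / (q - 1)) with hκ0def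
  have hκ0pos : 0 < κ0 := Real.rpow_pos_of_pos hsq0 _
  have hκ0lt1 : κ0 < 1 := Real.rpow_lt_one hsq0.le hsq1 (by positivity)
  have hκ0pow : κ0 ^ (q - 1) = f ^ q / A := by
    rw [hκ0def, ← Real.rpow_mul hsq0.le, one_div_mul_cancel hq1.ne', Real.rpow_one]
  -- key inequality from h2
  have hK : f ^ p / F < κ0 ^ (p - 1) := by
    have hbe : κ0 ^ (p-1) = (f^q/A) ^ ((p-1)/(q-1)) := by
      rw [hκ0def, ← Real.rpow_mul hsq0.le, show 1/(q-1)*(p-1) = (p-1)/(q-1) by ring]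
    rw [hbe]
    have hlog2 := Real.log_lt_log hA h2
    rw [Real.log_mul (Real.rpow_pos_of_pos hf _).ne' (Real.rpow_pos_of_pos hF _).ne',
      Real.log_rpow hf, Real.log_rpow hF] at hlog2
    have h2lin : (p-1) * Real.log A < (p-q) * Real.log f + (q-1) * Real.log F := by
      have hmul := mul_lt_mul_of_pos_left hlog2 hp1
      calc (p-1)*Real.log A
          < (p-1) * ((p-q)/(p-1)*Real.log f + (q-1)/(p-1)*Real.log F) := hmul
        _ = (p-q)*Real.log f + (q-1)*Real.log F := by field_simp; try ring
    have hfpF0 : 0 < f ^ p / F := div_pos hfp hF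
    rw [← Real.log_lt_log_iff hfpF0 (Real.rpow_pos_of_pos hsq0 _),
      Real.log_rpow hsq0, Real.log_div hfp.ne' hF.ne', Real.log_div hfq.ne' hA.ne',
      Real.log_rpow hf, Real.log_rpow hf, div_mul_eq_mul_div, lt_div_iff₀ hq1]
    nlinarith [h2lin]
  have hκ0p1 : κ0 ^ (p-1) < 1 := Real.rpow_lt_one hκ0pos.le hκ0lt1 hp1
  have hfpF1 : f ^ p / F < 1 := hK.trans hκ0p1
  have hfpF0 : 0 < f ^ p / F := div_pos hfp hF
  -- the endpoints z1 = ωp(f^p/F)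
  obtain ⟨hz1mem, hz1eq⟩ := hωp (f ^ p / F) ⟨hfpF0.le, hfpF1.le⟩
  set z1 := ωp (f ^ p / F) with hz1def
  have hz1gt1 : 1 < z1 := by
    rcases eq_or_lt_of_le hz1mem.1 with h | h
    · exfalso; rw [← h, Hone p] at hz1eq; linarith
    · exact h
  have hz1top : z1 < p/(p-1) := by
    rcases eq_or_lt_of_le hz1mem.2 with h | h
    · exfalso; rw [h, Htop p hp] at hz1eq; linarith
    · exact h
  obtain ⟨hz2mem, hz2eq⟩ := hωq (f ^ q / A) ⟨hsq0.le, hsq1.le⟩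
  have hHqz1 : f ^ q / A < q * z1 ^ (q-1) - (q-1) * z1 ^ q := by
    have := HstrictAnti q hq (mem_Ici.mpr hz1mem.1) (mem_Ici.mpr hz2mem.1) h3
    simp only at this
    rw [hz2eq] at this
    exact this
  -- the IVT function
  set G : ℝ → ℝ := fun z => (f^q/(A * (q * z^(q-1) - (q-1) * z^q)))^(1/(q-1))
    - (f^p/(F * (p * z^(p-1) - (p-1) * z^p)))^(1/(p-1)) with hGdef
  have hHQpos : ∀ z ∈ Icc (1:ℝ) z1, 0 < q * z^(q-1) - (q-1)*z^q :=
    fun z hz => Hpos q hq z hz.1 (lt_of_le_of_lt hz.2 (hz1top.trans hratio))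
  have hHPpos : ∀ z ∈ Icc (1:ℝ) z1, 0 < p * z^(p-1) - (p-1)*z^p :=
    fun z hz => Hpos p hp z hz.1 (lt_of_le_of_lt hz.2 hz1top)
  have hGcont : ContinuousOn G (Icc 1 z1) := by
    rw [hGdef]
    apply ContinuousOn.sub
    · apply ContinuousOn.rpow_const
      · exact continuousOn_const.div
          (continuousOn_const.mul ((Hcont q).mono (fun z hz => hz.1)))
          (fun z hz => (mul_pos hA (hHQpos z hz)).ne')
      · intro z hz; right; positivity
    · apply ContinuousOn.rpow_const
      · exact continuousOn_const.div
          (continuousOn_const.mul ((Hcont p).mono (fun z hz => hz.1)))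
          (fun z hz => (mul_pos hF (hHPpos z hz)).ne')
      · intro z hz; right; positivity
  have hG1 : 0 < G 1 := by
    rw [hGdef]
    simp only
    rw [Hone q, Hone p, mul_one, mul_one]
    have h5 := Real.rpow_lt_rpow hfpF0.le hK (by positivity : (0:ℝ) < 1/(p-1))
    have e2 : (κ0^(p-1))^(1/(p-1)) = κ0 := by
      rw [← Real.rpow_mul hκ0pos.le, mul_one_div_cancel hp1.ne', Real.rpow_one]
    rw [e2] at h5
    rw [← hκ0def]
    linarith
  have hGz1 : G z1 < 0 := by
    rw [hGdef]
    simp only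
    rw [hz1eq]
    have e1 : f^p/(F * (f^p/F)) = 1 := by field_simp
    rw [e1, Real.one_rpow]
    have hQ1 : 0 < q * z1^(q-1) - (q-1)*z1^q := hHQpos z1 ⟨hz1gt1.le, le_rfl⟩
    have hb : f^q/(A * (q*z1^(q-1)-(q-1)*z1^q)) < 1 := by
      rw [div_lt_one (mul_pos hA hQ1), mul_comm]
      exact (div_lt_iff₀ hA).mp hHqz1
    have := Real.rpow_lt_one (by positivity) hb (by positivity : (0:ℝ) < 1/(q-1))
    linarith
  obtain ⟨z, hzmem, hGz⟩ := intermediate_value_Ioo' hz1gt1.le hGcont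
    (⟨hGz1, hG1⟩ : (0:ℝ) ∈ Ioo (G z1) (G 1))
  obtain ⟨hzgt1, hzlt⟩ := hzmem
  have hzIcc : z ∈ Icc (1:ℝ) z1 := ⟨hzgt1.le, hzlt.le⟩
  have hQz : 0 < q * z^(q-1) - (q-1)*z^q := hHQpos z hzIcc
  have hQzlt1 : q * z^(q-1) - (q-1)*z^q < 1 := Hlt_one q hq z hzgt1
  have hPz : 0 < p * z^(p-1) - (p-1)*z^p := hHPpos z hzIcc
  have hPzlt1 : p * z^(p-1) - (p-1)*z^p < 1 := Hlt_one p hp z hzgt1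
  have hPzgt : f^p/F < p * z^(p-1) - (p-1)*z^p := by
    have := HstrictAnti p hp (mem_Ici.mpr hzgt1.le) (mem_Ici.mpr (by linarith : (1:ℝ) ≤ z1)) hzlt
    simp only at this
    rw [hz1eq] at this
    exact this
  rw [hGdef] at hGz
  simp only at hGz
  have hGz2 := sub_eq_zero.mp hGz
  set κ := (f^q/(A * (q * z^(q-1) - (q-1)*z^q)))^(1/(q-1)) with hκdef
  have hbase1 : 0 < f^q/(A * (q * z^(q-1) - (q-1)*z^q)) := div_pos hfq (mul_pos hA hQz)
  have hbase2 : 0 < f^p/(F * (p * z^(p-1) - (p-1)*z^p)) := div_pos hfp (mul_pos hF hPz)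
  have hκpow_q : κ ^ (q-1) = f^q/(A * (q * z^(q-1) - (q-1)*z^q)) := by
    rw [hκdef, ← Real.rpow_mul hbase1.le, one_div_mul_cancel hq1.ne', Real.rpow_one]
  have hκpow_p : κ ^ (p-1) = f^p/(F * (p * z^(p-1) - (p-1)*z^p)) := by
    rw [hGz2, ← Real.rpow_mul hbase2.le, one_div_mul_cancel hp1.ne', Real.rpow_one]
  have hκgt : κ0 < κ := by
    rw [hκ0def, hκdef]
    apply Real.rpow_lt_rpow hsq0.le ?_ (by positivity)
    rw [div_lt_div_iff₀ hA (mul_pos hA hQz)]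
    calc f^q * (A * (q * z^(q-1) - (q-1)*z^q)) = (f^q * A) * (q * z^(q-1) - (q-1)*z^q) := by ring
      _ < (f^q * A) * 1 := by
          exact mul_lt_mul_of_pos_left hQzlt1 (mul_pos hfq hA)
      _ = f^q * A := mul_one _
  have hκlt1 : κ < 1 := by
    rw [hGz2]
    apply Real.rpow_lt_one hbase2.le ?_ (by positivity)
    rw [div_lt_one (mul_pos hF hPz), mul_comm]
    exact (div_lt_iff₀ hF).mp hPzgt
  have harg_q : f ^ q / (κ ^ (q-1) * A) = q * z^(q-1) - (q-1)*z^q := by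
    rw [hκpow_q]
    field_simp
  have harg_p : f ^ p / (κ ^ (p-1) * F) = p * z^(p-1) - (p-1)*z^p := by
    rw [hκpow_p]
    field_simp
  have hωqz : ωq (q * z^(q-1) - (q-1)*z^q) = z := by
    obtain ⟨hwm, hwe⟩ := hωq _ ⟨hQz.le, hQzlt1.le⟩
    exact (HstrictAnti q hq).injOn (mem_Ici.mpr hwm.1) (mem_Ici.mpr hzgt1.le) hwe
  have hωpz : ωp (p * z^(p-1) - (p-1)*z^p) = z := by
    obtain ⟨hwm, hwe⟩ := hωp _ ⟨hPz.le, hPzlt1.le⟩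
    exact (HstrictAnti p hp).injOn (mem_Ici.mpr hwm.1) (mem_Ici.mpr hzgt1.le) hwe
  have hmaineq : ωq (f ^ q / (κ ^ (q - 1) * A)) = ωp (f ^ p / (κ ^ (p - 1) * F)) := by
    rw [harg_q, harg_p, hωqz, hωpz]
  -- uniqueness
  have claim : ∀ w : ℝ, w ∈ Ioo κ0 1 →
      ωq (f ^ q / (w ^ (q - 1) * A)) = ωp (f ^ p / (w ^ (p - 1) * F)) →
      ∃ u ∈ Ico (1:ℝ) (p/(p-1)),
        ((q-1) * Real.log (p * u^(p-1) - (p-1)*u^p)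
          - (p-1) * Real.log (q * u^(q-1) - (q-1)*u^q)
          = (q-1)*(p*Real.log f - Real.log F) - (p-1)*(q*Real.log f - Real.log A)) ∧
        w = (f^q/(A * (q * u^(q-1) - (q-1)*u^q)))^(1/(q-1)) := by
    intro w hw heqw
    have hw0 : 0 < w := hκ0pos.trans hw.1
    have hwqpos : 0 < w^(q-1) := Real.rpow_pos_of_pos hw0 _
    have hwppos : 0 < w^(p-1) := Real.rpow_pos_of_pos hw0 _
    have hwq : κ0^(q-1) < w^(q-1) := Real.rpow_lt_rpow hκ0pos.le hw.1 hq1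
    have hwp : κ0^(p-1) < w^(p-1) := Real.rpow_lt_rpow hκ0pos.le hw.1 hp1
    have hsq' : 0 < f^q/(w^(q-1)*A) := div_pos hfq (mul_pos hwqpos hA)
    have hsq'1 : f^q/(w^(q-1)*A) < 1 := by
      rw [div_lt_one (mul_pos hwqpos hA)]
      have hlt : f^q/A < w^(q-1) := by rw [← hκ0pow]; exact hwq
      exact (div_lt_iff₀ hA).mp hlt
    have hsp' : 0 < f^p/(w^(p-1)*F) := div_pos hfp (mul_pos hwppos hF)
    have hsp'1 : f^p/(w^(p-1)*F) < 1 := by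
      rw [div_lt_one (mul_pos hwppos hF)]
      exact (div_lt_iff₀ hF).mp (hK.trans hwp)
    obtain ⟨hum, hue⟩ := hωq _ ⟨hsq'.le, hsq'1.le⟩
    obtain ⟨hvm, hve⟩ := hωp _ ⟨hsp'.le, hsp'1.le⟩
    rw [← heqw] at hvm hve
    set u := ωq (f^q/(w^(q-1)*A)) with hudef
    have hup : u < p/(p-1) := by
      rcases eq_or_lt_of_le hvm.2 with h | h
      · exfalso; rw [h, Htop p hp] at hve; linarith
      · exact h
    refine ⟨u, ⟨hvm.1, hup⟩, ?_, ?_⟩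
    · rw [hue, hve,
        Real.log_div hfp.ne' (mul_pos hwppos hF).ne',
        Real.log_div hfq.ne' (mul_pos hwqpos hA).ne',
        Real.log_mul hwppos.ne' hF.ne', Real.log_mul hwqpos.ne' hA.ne',
        Real.log_rpow hf, Real.log_rpow hf, Real.log_rpow hw0, Real.log_rpow hw0]
      ring
    · rw [hue]
      have e : f^q/(A * (f^q/(w^(q-1)*A))) = w^(q-1) := by
        field_simp
      rw [e, ← Real.rpow_mul hw0.le, mul_one_div_cancel hq1.ne', Real.rpow_one]
  refine ⟨κ, ⟨⟨hκgt, hκlt1⟩, hmaineq⟩, ?_⟩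
  intro y hy
  obtain ⟨u1, hu1m, hu1C, hu1w⟩ := claim y hy.1 hy.2
  obtain ⟨u2, hu2m, hu2C, hu2w⟩ := claim κ ⟨hκgt, hκlt1⟩ hmaineq
  have huu : u1 = u2 := (PhiStrictAnti p q hq hpq).injOn hu1m hu2m (hu1C.trans hu2C.symm)
  rw [hu1w, hu2w, huu]
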